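/- Let k ≥ 3 and let t ∈ Z_{2^k} with t = 2^r s where s is odd and r ≥ 2 (and r < k). Then N_2(t, 2^k) = 4 · N_2(2^{r−2} s, 2^{k−2}) and N_3(t, 2^k) = 8 · N_3(2^{r−2} s, 2^{k−2}). -/

import Mathlib

/-- `sumSqCount m n t` is the number of `m`-tuples of elements of `ZMod n` whose
squares sum to `t`. -/
noncomputable def sumSqCount (m n : ℕ) (t : ZMod n) : ℕ :=
  Nat.card {x : Fin m → ZMod n // ∑ i, (x i) ^ 2 = t}

private lemma nat_inj_helper (P yv ev yv' ev' : ℕ) (hy : yv < P) (hy' : yv' < P)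
    (he : ev < 2) (he' : ev' < 2) (h : 2*yv + 2*P*ev = 2*yv' + 2*P*ev') :
    yv = yv' ∧ ev = ev' := by
  interval_cases ev <;> interval_cases ev' <;> omega

private lemma nat_bound_helper (P yv ev : ℕ) (hy : yv < P) (he : ev < 2) :
    2*yv + 2*P*ev < 4*P := by
  interval_cases ev <;> omega

lemma key (m k : ℕ) (hk : 3 ≤ k) (t : ZMod (2 ^ k)) (r s : ℕ)
    (ht : t.val = 2 ^ r * s) (hr : 2 ≤ r) (hrk : r < k)
    (heven : ∀ x : Fin m → ZMod (2 ^ k), ∑ i, (x i) ^ 2 = t → ∀ i, (x i).val % 2 = 0) :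
    sumSqCount m (2 ^ k) t =
      2 ^ m * sumSqCount m (2 ^ (k - 2)) ((2 ^ (r - 2) * s : ℕ) : ZMod (2 ^ (k - 2))) := by
  haveI : NeZero (2 ^ k) := ⟨pow_ne_zero _ two_ne_zero⟩
  haveI : NeZero (2 ^ (k - 2)) := ⟨pow_ne_zero _ two_ne_zero⟩
  set P : ℕ := 2 ^ (k - 2) with hP
  have hP0 : 0 < P := Nat.pow_pos (by norm_num)
  have h4P : 4 * P = 2 ^ k := by
    rw [hP, show (4:ℕ) = 2^2 from rfl, ← pow_add]
    congr 1; omega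
  have hrs : 2 ^ r * s = 4 * (2 ^ (r-2) * s) := by
    rw [show (4:ℕ) = 2^2 from rfl, ← mul_assoc, ← pow_add]
    congr 2; omega
  -- key algebra in ZMod (2^k)
  have h2c : (2 : ZMod (2^k)) * ((2*P : ℕ) : ZMod (2^k)) = 0 := by
    have : ((4*P : ℕ) : ZMod (2^k)) = 0 := by rw [h4P]; exact ZMod.natCast_self _
    push_cast at this ⊢
    linear_combination this
  have hc2 : (((2*P : ℕ) : ZMod (2^k)))^2 = 0 := by
    have h1 : ((2*P : ℕ) : ZMod (2^k))^2 = ((4*P : ℕ) : ZMod (2^k)) * (P : ZMod (2^k)) := by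
      push_cast; ring
    rw [h1, show ((4*P : ℕ) : ZMod (2^k)) = 0 from by rw [h4P]; exact ZMod.natCast_self _,
      zero_mul]
  have hsq : ∀ u v : ZMod (2^k), (2*u + ((2*P : ℕ) : ZMod (2^k))*v)^2 = 4*u^2 := by
    intro u v
    have : (2*u + ((2*P : ℕ) : ZMod (2^k))*v)^2
        = 4*u^2 + (2*((2*P : ℕ) : ZMod (2^k)))*(2*u*v)
          + (((2*P : ℕ) : ZMod (2^k)))^2 * v^2 := by ring
    rw [this, h2c, hc2]; ring
  -- the forward map
  set t' : ZMod P := ((2 ^ (r-2) * s : ℕ) : ZMod P) with ht'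
  let F : ((Fin m → Fin 2) × {y : Fin m → ZMod P // ∑ i, (y i) ^ 2 = t'}) →
      {x : Fin m → ZMod (2^k) // ∑ i, (x i) ^ 2 = t} := fun p =>
    ⟨fun i => ((2 * (p.2.1 i).val + 2*P*(p.1 i).val : ℕ) : ZMod (2^k)), by
      obtain ⟨e, y, hy⟩ := p
      have hYcast : ((∑ i, (y i).val ^ 2 : ℕ) : ZMod P) = ((2 ^ (r-2) * s : ℕ) : ZMod P) := by
        rw [Nat.cast_sum]
        simp only [Nat.cast_pow, ZMod.natCast_zmod_val]
        rw [← ht']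
        exact hy
      have hYmod : (∑ i, (y i).val ^ 2) ≡ 2 ^ (r-2) * s [MOD P] :=
        (ZMod.natCast_eq_natCast_iff _ _ _).mp hYcast
      have h4Y : (4 * ∑ i, (y i).val ^ 2) ≡ t.val [MOD 2^k] := by
        rw [ht, hrs, ← h4P]
        exact Nat.ModEq.mul_left' 4 hYmod
      calc ∑ i, (((2 * (y i).val + 2*P*(e i).val : ℕ) : ZMod (2^k)))^2
          = ∑ i, (2*((y i).val : ZMod (2^k))
              + ((2*P : ℕ) : ZMod (2^k))*((e i).val : ZMod (2^k)))^2 := by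
            refine Finset.sum_congr rfl fun i _ => ?_
            push_cast; ring_nf
        _ = ∑ i, 4*((y i).val : ZMod (2^k))^2 := by
            refine Finset.sum_congr rfl fun i _ => hsq _ _
        _ = ((4 * ∑ i, (y i).val ^ 2 : ℕ) : ZMod (2^k)) := by push_cast; rw [Finset.mul_sum]
        _ = ((t.val : ℕ) : ZMod (2^k)) := (ZMod.natCast_eq_natCast_iff _ _ _).mpr h4Y
        _ = t := ZMod.natCast_zmod_val t⟩
  have hFinj : Function.Injective F := by
    rintro ⟨e, y, hy⟩ ⟨e', y', hy'⟩ h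
    have hco : ∀ i, ((2 * (y i).val + 2*P*(e i).val : ℕ) : ZMod (2^k))
        = ((2 * (y' i).val + 2*P*(e' i).val : ℕ) : ZMod (2^k)) := fun i =>
      congr_fun (congrArg Subtype.val h) i
    have hvals : ∀ i, (y i).val = (y' i).val ∧ (e i).val = (e' i).val := by
      intro i
      have h1 := congrArg ZMod.val (hco i)
      rw [ZMod.val_cast_of_lt, ZMod.val_cast_of_lt] at h1
      · exact nat_inj_helper P _ _ _ _ (ZMod.val_lt _) (ZMod.val_lt _) (e i).isLt (e' i).isLt h1
      · rw [← h4P]; exact nat_bound_helper P _ _ (ZMod.val_lt _) (e' i).isLt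
      · rw [← h4P]; exact nat_bound_helper P _ _ (ZMod.val_lt _) (e i).isLt
    have hy'' : y = y' := by
      ext i : 1
      exact ZMod.val_injective _ (hvals i).1
    have he'' : e = e' := by
      funext i; exact Fin.ext (hvals i).2
    subst hy'' he''
    rfl
  have hFsurj : Function.Surjective F := by
    rintro ⟨x, hx⟩
    have hev := heven x hx
    have hxb : ∀ i, 2 * ((x i).val / 2) = (x i).val := fun i => by
      have := hev i; omega
    have hblt : ∀ i, (x i).val / 2 < 2 * P := by
      intro i
      have h1 : (x i).val < 4 * P := by rw [h4P]; exact ZMod.val_lt _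
      omega
    refine ⟨⟨fun i => ⟨(x i).val / 2 / P, ?_⟩,
      ⟨fun i => (((x i).val / 2 : ℕ) : ZMod P), ?_⟩⟩, ?_⟩
    · exact Nat.div_lt_of_lt_mul (by rw [mul_comm]; exact hblt i)
    · -- membership: sum of squares of y equals t'
      have hxmod : (∑ i, ((x i).val / 2) ^ 2) ≡ 2 ^ (r-2) * s [MOD P] := by
        have h4B : (4 * ∑ i, ((x i).val / 2) ^ 2) ≡ 4 * (2 ^ (r-2) * s) [MOD 4 * P] := by
          rw [h4P, ← hrs, ← ht]
          rw [← ZMod.natCast_eq_natCast_iff]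
          push_cast
          rw [Finset.mul_sum]
          calc ∑ i, 4 * (((x i).val / 2 : ℕ) : ZMod (2^k))^2
              = ∑ i, (((x i).val : ℕ) : ZMod (2^k))^2 := by
                refine Finset.sum_congr rfl fun i _ => ?_
                obtain ⟨b, hb⟩ : ∃ b, (x i).val = 2*b := ⟨_, (hxb i).symm⟩
                rw [hb, Nat.mul_div_cancel_left b (by norm_num)]
                push_cast; ring
            _ = ∑ i, (x i)^2 := by
                refine Finset.sum_congr rfl fun i _ => by rw [ZMod.natCast_zmod_val]
            _ = t := hx
            _ = ((t.val : ℕ) : ZMod (2^k)) := (ZMod.natCast_zmod_val t).symm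
        exact Nat.ModEq.mul_left_cancel' (by norm_num) h4B
      rw [ht']
      rw [← ZMod.natCast_eq_natCast_iff] at hxmod
      push_cast at hxmod ⊢
      exact hxmod
    · apply Subtype.ext
      funext i
      show ((2 * (((((x i).val / 2 : ℕ) : ZMod P)).val) + 2*P*((x i).val / 2 / P) : ℕ)
          : ZMod (2^k)) = x i
      rw [ZMod.val_natCast]
      have harith : 2 * ((x i).val / 2 % P) + 2*P*((x i).val / 2 / P) = (x i).val := by
        have h1 := Nat.mod_add_div ((x i).val / 2) P
        have h2 := hxb i
        nlinarith [h1, h2]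
      rw [harith, ZMod.natCast_zmod_val]
  have hcard := Nat.card_congr (Equiv.ofBijective F ⟨hFinj, hFsurj⟩)
  rw [sumSqCount, sumSqCount, ← hcard, Nat.card_prod]
  congr 1
  simp [Nat.card_eq_fintype_card]


private lemma zmod4_two : ∀ a b : ZMod 4, a^2 + b^2 = 0 →
    a.val % 2 = 0 ∧ b.val % 2 = 0 := by decide

private lemma zmod4_three : ∀ a b c : ZMod 4, a^2 + b^2 + c^2 = 0 →
    a.val % 2 = 0 ∧ b.val % 2 = 0 ∧ c.val % 2 = 0 := by decide

private lemma four_dvd_pow {k : ℕ} (hk : 2 ≤ k) : (4:ℕ) ∣ 2^k := by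
  rw [show (4:ℕ) = 2^2 from rfl]; exact pow_dvd_pow 2 hk

private lemma cast4_val {k : ℕ} (hk : 2 ≤ k) (z : ZMod (2^k)) :
    ((ZMod.castHom (four_dvd_pow hk) (ZMod 4)) z).val % 2 = z.val % 2 := by
  haveI : NeZero (2 ^ k) := ⟨pow_ne_zero _ two_ne_zero⟩
  rw [ZMod.castHom_apply, ← ZMod.natCast_val, ZMod.val_natCast]
  exact Nat.mod_mod_of_dvd _ (by norm_num)

private lemma cast4_t {k : ℕ} (hk : 2 ≤ k) (t : ZMod (2^k)) (r s : ℕ)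
    (ht : t.val = 2 ^ r * s) (hr : 2 ≤ r) :
    (ZMod.castHom (four_dvd_pow hk) (ZMod 4)) t = 0 := by
  haveI : NeZero (2 ^ k) := ⟨pow_ne_zero _ two_ne_zero⟩
  rw [ZMod.castHom_apply, ← ZMod.natCast_val, ht]
  rw [ZMod.natCast_eq_zero_iff]
  exact Dvd.dvd.mul_right (four_dvd_pow hr) s
theorem stmt_16 (k : ℕ) (hk : 3 ≤ k) (t : ZMod (2 ^ k)) (r s : ℕ)
    (ht : t.val = 2 ^ r * s) (hs : Odd s) (hr : 2 ≤ r) (hrk : r < k) :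
    sumSqCount 2 (2 ^ k) t =
      4 * sumSqCount 2 (2 ^ (k - 2)) ((2 ^ (r - 2) * s : ℕ) : ZMod (2 ^ (k - 2))) ∧
    sumSqCount 3 (2 ^ k) t =
      8 * sumSqCount 3 (2 ^ (k - 2)) ((2 ^ (r - 2) * s : ℕ) : ZMod (2 ^ (k - 2))) := by
  have hk2 : 2 ≤ k := by omega
  constructor
  · rw [show (4:ℕ) = 2^2 from rfl]
    apply key 2 k hk t r s ht hr hrk
    intro x hx i
    have hphi := congrArg (ZMod.castHom (four_dvd_pow hk2) (ZMod 4)) hx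
    rw [map_sum] at hphi
    simp only [map_pow] at hphi
    rw [Fin.sum_univ_two, cast4_t hk2 t r s ht hr] at hphi
    have h2 := zmod4_two _ _ hphi
    rw [← cast4_val hk2 (x i)]
    fin_cases i
    · exact h2.1
    · exact h2.2
  · rw [show (8:ℕ) = 2^3 from rfl]
    apply key 3 k hk t r s ht hr hrk
    intro x hx i
    have hphi := congrArg (ZMod.castHom (four_dvd_pow hk2) (ZMod 4)) hx
    rw [map_sum] at hphi
    simp only [map_pow] at hphi
    rw [Fin.sum_univ_three, cast4_t hk2 t r s ht hr] at hphi
    have h3 := zmod4_three _ _ _ hphi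
    rw [← cast4_val hk2 (x i)]
    fin_cases i
    · exact h3.1
    · exact h3.2.1
    · exact h3.2.2
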